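/- In Theorem 2 (two-environment identification): Suppose (γ,T) and (γ̃,T̃) form a value-distinguishing pair of MDPs on finite S, A, meaning any solution (w,w̃) of w(s) − γ Σ_{s'} T(s'|s,a) w(s') = w̃(s) − γ̃ Σ_{s'} T̃(s'|s,a) w̃(s') for all s,a has w or w̃ constant. If (v₁,ṽ₁) and (v₂,ṽ₂) both solve λ log(π(a|s)/π̃(a|s)) = γΣ_{s'}T(s'|s,a)v(s') − γ̃Σ_{s'}T̃(s'|s,a)ṽ(s') − (v(s) − ṽ(s)) for all s,a, and additionally γ,γ̃ ∈ [0,1), then v₁ − v₂ is a constant function. -/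

import Mathlib

lemma fixedpt_const {S : Type*} [Fintype S] [Nonempty S]
    (γ : ℝ) (hγ0 : 0 ≤ γ) (hγ1 : γ < 1) (P : S → S → ℝ)
    (hP0 : ∀ s s', 0 ≤ P s s') (hP1 : ∀ s, ∑ s', P s s' = 1)
    (f : S → ℝ) (k : ℝ) (hf : ∀ s, f s - γ * ∑ s', P s s' * f s' = k) :
    ∃ c, ∀ s, f s = c := by
  obtain ⟨sM, _, hM⟩ := Finset.exists_max_image Finset.univ f ⟨Classical.arbitrary S, Finset.mem_univ _⟩
  obtain ⟨sm, _, hm⟩ := Finset.exists_min_image Finset.univ f ⟨Classical.arbitrary S, Finset.mem_univ _⟩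
  have hub : ∀ s, ∑ s', P s s' * f s' ≤ f sM := by
    intro s
    calc ∑ s', P s s' * f s' ≤ ∑ s', P s s' * f sM := by
          apply Finset.sum_le_sum
          intro i _
          exact mul_le_mul_of_nonneg_left (hM i (Finset.mem_univ i)) (hP0 s i)
      _ = f sM := by rw [← Finset.sum_mul, hP1, one_mul]
  have hlb : ∀ s, f sm ≤ ∑ s', P s s' * f s' := by
    intro s
    calc f sm = ∑ s', P s s' * f sm := by rw [← Finset.sum_mul, hP1, one_mul]
      _ ≤ ∑ s', P s s' * f s' := by
          apply Finset.sum_le_sum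
          intro i _
          exact mul_le_mul_of_nonneg_left (hm i (Finset.mem_univ i)) (hP0 s i)
  have h1 : (1 - γ) * f sM ≤ k := by
    have := hf sM
    nlinarith [hub sM]
  have h2 : k ≤ (1 - γ) * f sm := by
    have := hf sm
    nlinarith [hlb sm]
  have hle : f sM ≤ f sm := by nlinarith
  refine ⟨f sm, fun s => le_antisymm ?_ (hm s (Finset.mem_univ s))⟩
  exact (hM s (Finset.mem_univ s)).trans hle

theorem stmt_16 {S A : Type*} [Fintype S] [Nonempty S] [Fintype A] [Nonempty A]
    (lam γ γ' : ℝ) (hlam : 0 < lam)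
    (hγ0 : 0 ≤ γ) (hγ1 : γ < 1) (hγ'0 : 0 ≤ γ') (hγ'1 : γ' < 1)
    (T T' : S → A → S → ℝ)
    (hT0 : ∀ s a s', 0 ≤ T s a s') (hT1 : ∀ s a, ∑ s', T s a s' = 1)
    (hT'0 : ∀ s a s', 0 ≤ T' s a s') (hT'1 : ∀ s a, ∑ s', T' s a s' = 1)
    (pi pi' : S → A → ℝ)
    (hpipos : ∀ s a, 0 < pi s a) (hpi'pos : ∀ s a, 0 < pi' s a)
    (hVD : ∀ w w' : S → ℝ,
      (∀ s a, w s - γ * ∑ s', T s a s' * w s' = w' s - γ' * ∑ s', T' s a s' * w' s') →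
      ((∃ c, ∀ s, w s = c) ∨ (∃ c, ∀ s, w' s = c)))
    (v₁ vt₁ v₂ vt₂ : S → ℝ)
    (h₁ : ∀ s a, lam * Real.log (pi s a / pi' s a) =
      γ * (∑ s', T s a s' * v₁ s') - γ' * (∑ s', T' s a s' * vt₁ s') - (v₁ s - vt₁ s))
    (h₂ : ∀ s a, lam * Real.log (pi s a / pi' s a) =
      γ * (∑ s', T s a s' * v₂ s') - γ' * (∑ s', T' s a s' * vt₂ s') - (v₂ s - vt₂ s)) :
    ∃ c : ℝ, ∀ s, v₁ s - v₂ s = c := by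
  set w : S → ℝ := fun s => v₁ s - v₂ s with hw
  set w' : S → ℝ := fun s => vt₁ s - vt₂ s with hw'
  have key : ∀ s a, w s - γ * ∑ s', T s a s' * w s' = w' s - γ' * ∑ s', T' s a s' * w' s' := by
    intro s a
    have e1 := h₁ s a
    have e2 := h₂ s a
    have hsum : ∑ s', T s a s' * w s' = (∑ s', T s a s' * v₁ s') - (∑ s', T s a s' * v₂ s') := by
      rw [← Finset.sum_sub_distrib]; apply Finset.sum_congr rfl; intro i _; ring
    have hsum' : ∑ s', T' s a s' * w' s' = (∑ s', T' s a s' * vt₁ s') - (∑ s', T' s a s' * vt₂ s') := by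
      rw [← Finset.sum_sub_distrib]; apply Finset.sum_congr rfl; intro i _; ring
    rw [hsum, hsum']
    simp only [hw, hw']
    linarith
  rcases hVD w w' key with h | ⟨c, hc⟩
  · exact h
  · -- w' constant ⇒ w s - γ ∑ T w = c(1-γ') for all s
    have a0 := Classical.arbitrary A
    have hkey : ∀ s, w s - γ * ∑ s', T s a0 s' * w s' = c * (1 - γ') := by
      intro s
      have := key s a0
      have hc' : ∑ s', T' s a0 s' * w' s' = c := by
        calc ∑ s', T' s a0 s' * w' s' = ∑ s', T' s a0 s' * c := by
              apply Finset.sum_congr rfl; intro i _; rw [hc i]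
          _ = c := by rw [← Finset.sum_mul, hT'1, one_mul]
      rw [this, hc s, hc']; ring
    exact fixedpt_const γ hγ0 hγ1 (fun s => T s a0) (fun s => hT0 s a0) (fun s => hT1 s a0) w _ hkey
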